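/- Let P be a Set-based tripos with generic predicate tr_Σ ∈ P Σ, let →̇ ∈ Σ^(Σ×Σ) and ⋀̇ ∈ Σ^{𝒫(Σ)} be codes with ⟦→̇⟧_{Σ×Σ} = ⟦π⟧_{Σ×Σ} ⇨ ⟦π'⟧_{Σ×Σ} and ⟦⋀̇⟧_{𝒫(Σ)} = ∀e₂(⟦e₁⟧_E), and let A be the set of upward-closed subsets of A₀ (the type inductively generated by ξ̇ for ξ ∈ Σ and s ↦ α for s ∈ 𝒫(Σ), α ∈ A₀, with preorder generated by ξ̇ ≤ ξ̇ and (s ↦ α) ≤ (s' ↦ α') when s ⊆ s' and α ≤ α'). Define φ₀ : A₀ → Σ by φ₀(ξ̇) := ξ and φ₀(s ↦ α) := (⋀̇ s) →̇ φ₀(α), φ : A → Σ by φ(a) := ⋀̇ {φ₀(α) : α ∈ a}, and tr_A := P φ(tr_Σ) ∈ P A. Then tr_A is a generic predicate for P: for every set X, the map A^X → P X, a ↦ P a(tr_A), is surjective. -/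

import Mathlib

universe u v

/-- The inductively generated set of atoms `A₀`: a finite list of subsets of `σ`
terminated by an element of `σ`. -/
inductive A0 (σ : Type u) : Type u where
  | base : σ → A0 σ
  | arrow : Set σ → A0 σ → A0 σ

/-- The preorder on atoms, inductively generated by the two rules. -/
inductive A0.Le {σ : Type u} : A0 σ → A0 σ → Prop where
  | base (ξ : σ) : A0.Le (.base ξ) (.base ξ)
  | arrow {s s' : Set σ} {α α' : A0 σ} :
      s ⊆ s' → A0.Le α α' → A0.Le (.arrow s α) (.arrow s' α')

/-- A subset of `A0 σ` is upward closed w.r.t. the preorder `A0.Le`. -/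
def UpClosed {σ : Type u} (a : Set (A0 σ)) : Prop :=
  ∀ α β, α ∈ a → A0.Le α β → β ∈ a

/-- The carrier `A` of the implicative structure: upward-closed subsets of `A0 σ`. -/
def Aof (σ : Type u) : Type u := {a : Set (A0 σ) // UpClosed a}

/-- The conversion function `φ₀ : A₀ → Σ`. -/
def phi0 {σ : Type u} (dInf : Set σ → σ) (dImp : σ × σ → σ) : A0 σ → σ
  | .base ξ => ξ
  | .arrow s α => dImp (dInf s, phi0 dInf dImp α)

/-- The conversion function `φ : A → Σ`, `φ(a) := ⋀̇ {φ₀(α) : α ∈ a}`. -/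
def phiA {σ : Type u} (dInf : Set σ → σ) (dImp : σ × σ → σ) (a : Aof σ) : σ :=
  dInf (phi0 dInf dImp '' a.1)

theorem trA_is_generic
    (P : Type u → Type v) [∀ X, HeytingAlgebra (P X)]
    (map : ∀ {X Y : Type u}, (X → Y) → P Y → P X)
    (map_id : ∀ (X : Type u), map (id : X → X) = id)
    (map_comp : ∀ {X Y Z : Type u} (f : X → Y) (g : Y → Z), map (g ∘ f) = map f ∘ map g)
    (map_inf : ∀ {X Y : Type u} (f : X → Y) (p q : P Y), map f (p ⊓ q) = map f p ⊓ map f q)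
    (map_sup : ∀ {X Y : Type u} (f : X → Y) (p q : P Y), map f (p ⊔ q) = map f p ⊔ map f q)
    (map_himp : ∀ {X Y : Type u} (f : X → Y) (p q : P Y), map f (p ⇨ q) = map f p ⇨ map f q)
    (map_top : ∀ {X Y : Type u} (f : X → Y), map f (⊤ : P Y) = ⊤)
    (map_bot : ∀ {X Y : Type u} (f : X → Y), map f (⊥ : P Y) = ⊥)
    (fE fA : ∀ {X Y : Type u}, (X → Y) → P X → P Y)
    (fE_mono : ∀ {X Y : Type u} (f : X → Y), Monotone (fE f))
    (fA_mono : ∀ {X Y : Type u} (f : X → Y), Monotone (fA f))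
    (adjE : ∀ {X Y : Type u} (f : X → Y) (p : P X) (q : P Y), fE f p ≤ q ↔ p ≤ map f q)
    (adjA : ∀ {X Y : Type u} (f : X → Y) (p : P X) (q : P Y), q ≤ fA f p ↔ map f q ≤ p)
    (BC : ∀ {X X₁ X₂ Y : Type u} (f₁ : X → X₁) (f₂ : X → X₂) (g₁ : X₁ → Y) (g₂ : X₂ → Y),
      g₁ ∘ f₁ = g₂ ∘ f₂ →
      (∀ (x₁ : X₁) (x₂ : X₂), g₁ x₁ = g₂ x₂ → ∃! x : X, f₁ x = x₁ ∧ f₂ x = x₂) →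
      fE f₁ ∘ map f₂ = map g₁ ∘ fE g₂ ∧ fA f₁ ∘ map f₂ = map g₁ ∘ fA g₂)
    (Sig : Type u) (tr : P Sig)
    (htr : ∀ X : Type u, Function.Surjective (fun σ : X → Sig => map σ tr))
    (dImp : Sig × Sig → Sig)
    (hdImp : map dImp tr
      = map (Prod.fst : Sig × Sig → Sig) tr ⇨ map (Prod.snd : Sig × Sig → Sig) tr)
    (dInf : Set Sig → Sig)
    (hdInf : map dInf tr = fA (fun z : {z : Sig × Set Sig // z.1 ∈ z.2} => z.1.2)
      (map (fun z : {z : Sig × Set Sig // z.1 ∈ z.2} => z.1.1) tr))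
    :
    ∀ X : Type u, Function.Surjective
      (fun a : X → Aof Sig => map a (map (phiA dInf dImp) tr)) := by
  intro X p
  obtain ⟨σ, hσ⟩ := htr X p
  -- the code: x ↦ {base (σ x)}
  have upcl : ∀ x : X, UpClosed ({A0.base (σ x)} : Set (A0 Sig)) := by
    intro x α β hα hle
    rcases hα with rfl
    cases hle
    rfl
  refine ⟨fun x => ⟨{A0.base (σ x)}, upcl x⟩, ?_⟩
  have hphi : (phiA dInf dImp) ∘ (fun x : X => (⟨{A0.base (σ x)}, upcl x⟩ : Aof Sig))
      = dInf ∘ (fun x : X => ({σ x} : Set Sig)) := by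
    funext x
    show dInf (phi0 dInf dImp '' {A0.base (σ x)}) = dInf {σ x}
    rw [Set.image_singleton]; rfl
  have hfAid : ∀ (q : P X), fA (id : X → X) q = q := by
    intro q
    apply le_antisymm
    · have := (adjA (id : X → X) q (fA (id : X → X) q)).1 le_rfl
      rwa [map_id] at this
    · rw [adjA, map_id]; exact le_rfl
  -- Beck–Chevalley for the pullback of s := (x ↦ {σ x}) along e₂
  set e₁ : {z : Sig × Set Sig // z.1 ∈ z.2} → Sig := fun z => z.1.1 with he₁
  set e₂ : {z : Sig × Set Sig // z.1 ∈ z.2} → Set Sig := fun z => z.1.2 with he₂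
  set s : X → Set Sig := fun x => ({σ x} : Set Sig) with hs
  set f₂ : X → {z : Sig × Set Sig // z.1 ∈ z.2} :=
    fun x => ⟨(σ x, {σ x}), rfl⟩ with hf₂
  have hcomm : s ∘ (id : X → X) = e₂ ∘ f₂ := rfl
  have hpb : ∀ (x : X) (z : {z : Sig × Set Sig // z.1 ∈ z.2}), s x = e₂ z →
      ∃! x' : X, (id : X → X) x' = x ∧ f₂ x' = z := by
    intro x z hz
    refine ⟨x, ⟨rfl, ?_⟩, ?_⟩
    · have hz2 : z.1.2 = {σ x} := hz.symm
      have hz1 : z.1.1 = σ x := by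
        have := z.2
        rw [hz2] at this
        exact this
      apply Subtype.ext
      exact Prod.ext hz1.symm hz2.symm
    · rintro y ⟨rfl, -⟩
      rfl
  have hBC := (BC (id : X → X) f₂ s e₂ hcomm hpb).2
  have hBC' := congrFun hBC (map e₁ tr)
  simp only [Function.comp_apply] at hBC'
  rw [hfAid] at hBC'
  show map _ (map (phiA dInf dImp) tr) = p
  calc map (fun x : X => (⟨{A0.base (σ x)}, upcl x⟩ : Aof Sig)) (map (phiA dInf dImp) tr)
      = map ((phiA dInf dImp) ∘ (fun x : X => (⟨{A0.base (σ x)}, upcl x⟩ : Aof Sig))) tr := by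
        exact (congrFun (map_comp _ _) tr).symm
    _ = map (dInf ∘ s) tr := by rw [hphi]
    _ = map s (map dInf tr) := by rw [map_comp]; rfl
    _ = map s (fA e₂ (map e₁ tr)) := by rw [hdInf]
    _ = map f₂ (map e₁ tr) := hBC'.symm
    _ = map (e₁ ∘ f₂) tr := by rw [map_comp]; rfl
    _ = map σ tr := rfl
    _ = p := hσ
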